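/- Let G be a finite graph on vertices {1, …, n} and let H₁, …, H_n be edgeless finite graphs. Then the inflation G[H₁, …, H_n] satisfies lcw(G[H₁, …, H_n]) = lcw(G), provided each H_i is nonempty. -/

import Mathlib

/-! ## Common definitions

Linear clique-width (lcw) expressions and derived notions, following
Brignall–Lozin–Stacho, "Bichain graphs: geometric model and universal graphs" /
"Linear clique-width of subclasses of cographs".

An lcw expression over a label alphabet `L` is a list of operations:
insert a new vertex with a given label, add all edges between two distinct
label classes, or relabel one label class to another.  Vertices are indexed
by the natural numbers `0, 1, 2, …` in order of insertion. -/

/-- The three kinds of operations of an lcw expression. -/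
inductive LcwOp (L : Type) where
  | insert : L → LcwOp L
  | join : L → L → LcwOp L
  | relabel : L → L → LcwOp L

/-- The state while executing an lcw expression: the number `n` of vertices
inserted so far (the vertices are `0, …, n-1`), the adjacency relation built
so far, and the current labeling (`none` for indices not yet inserted). -/
structure LcwState (L : Type) where
  n : ℕ
  adj : ℕ → ℕ → Prop
  lab : ℕ → Option L

/-- The initial, empty state. -/
def LcwState.init (L : Type) : LcwState L :=
  ⟨0, fun _ _ => False, fun _ => none⟩

/-- Executing one operation. -/
def LcwState.step {L : Type} [DecidableEq L] (s : LcwState L) : LcwOp L → LcwState L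
  | .insert a => ⟨s.n + 1, s.adj, fun v => if v = s.n then some a else s.lab v⟩
  | .join i j =>
      ⟨s.n,
       fun u v => s.adj u v ∨
         (u ≠ v ∧ ((s.lab u = some i ∧ s.lab v = some j) ∨
                   (s.lab u = some j ∧ s.lab v = some i))),
       s.lab⟩
  | .relabel i j => ⟨s.n, s.adj, fun v => if s.lab v = some i then some j else s.lab v⟩

/-- Executing an lcw expression (a list of operations) from the empty state. -/
def runLcw {L : Type} [DecidableEq L] (e : List (LcwOp L)) : LcwState L :=
  e.foldl LcwState.step (LcwState.init L)

/-- Well-formedness: every edge-adding operation uses two distinct labels. -/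
def WfExpr {L : Type} (e : List (LcwOp L)) : Prop :=
  ∀ op ∈ e, ∀ i j : L, op = LcwOp.join i j → i ≠ j

/-- The expression `e` builds the graph `G`, where the bijection
`f` sends each vertex of `G` to its insertion index (so `f` records the
insertion order of the vertices). -/
def BuildsVia {L V : Type} [DecidableEq L] [Fintype V] (e : List (LcwOp L))
    (G : SimpleGraph V) (f : V → ℕ) : Prop :=
  WfExpr e ∧ Function.Injective f ∧ (runLcw e).n = Fintype.card V ∧
    (∀ v, f v < (runLcw e).n) ∧ ∀ u v, G.Adj u v ↔ (runLcw e).adj (f u) (f v)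

/-- The expression `e` builds the graph `G`. -/
def Builds {L V : Type} [DecidableEq L] [Fintype V] (e : List (LcwOp L))
    (G : SimpleGraph V) : Prop :=
  ∃ f : V → ℕ, BuildsVia e G f

/-- The linear clique-width of a finite graph: the least size of a label
alphabet over which some lcw expression builds `G`.  (An expression over
`Fin k` is an expression using `k` labels; an *efficient* expression for `G`
is one over `Fin (lcw G)`.) -/
noncomputable def lcw {V : Type} [Fintype V] (G : SimpleGraph V) : ℕ :=
  sInf {k : ℕ | ∃ e : List (LcwOp (Fin k)), Builds e G}

/-- `ℓ` is a sink label of the expression `e`: it is never used in an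
edge-adding operation and vertices labeled `ℓ` are never relabeled. -/
def SinkLabel {L : Type} (e : List (LcwOp L)) (ℓ : L) : Prop :=
  (∀ op ∈ e, ∀ i j : L, op = LcwOp.join i j → i ≠ ℓ ∧ j ≠ ℓ) ∧
  (∀ op ∈ e, ∀ j : L, op = LcwOp.relabel ℓ j → j = ℓ)

/-- An expression is sink-free if no label is a sink label. -/
def SinkFree {L : Type} (e : List (LcwOp L)) : Prop :=
  ∀ ℓ : L, ¬ SinkLabel e ℓ

/-- The disjoint union of two graphs. -/
def GraphDisjUnion {V W : Type} (G : SimpleGraph V) (H : SimpleGraph W) :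
    SimpleGraph (V ⊕ W) where
  Adj x y :=
    match x, y with
    | Sum.inl a, Sum.inl b => G.Adj a b
    | Sum.inr a, Sum.inr b => H.Adj a b
    | _, _ => False
  symm := by
    constructor
    rintro (a | a) (b | b) h
    · exact G.adj_symm h
    · exact h.elim
    · exact h.elim
    · exact H.adj_symm h
  loopless := by
    constructor
    rintro (a | a) h
    · exact G.loopless.irrefl a h
    · exact H.loopless.irrefl a h

/-- The join of two graphs: their disjoint union together with all edges
between the two sides. -/
def GraphJoin {V W : Type} (G : SimpleGraph V) (H : SimpleGraph W) :
    SimpleGraph (V ⊕ W) :=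
  (GraphDisjUnion Gᶜ Hᶜ)ᶜ

/-- `H` is (isomorphic to) an induced subgraph of `G`. -/
def InducedSubgraphOf {W V : Type} (H : SimpleGraph W) (G : SimpleGraph V) : Prop :=
  ∃ f : W ↪ V, ∀ a b : W, H.Adj a b ↔ G.Adj (f a) (f b)

/-- The path `P₄` on four vertices (edges 01, 12, 23). -/
def pathP4 : SimpleGraph (Fin 4) :=
  SimpleGraph.fromRel (fun a b => (b : ℕ) = (a : ℕ) + 1)

/-- The cycle `C₄` on four vertices (edges 01, 12, 23, 30). -/
def cycleC4 : SimpleGraph (Fin 4) :=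
  SimpleGraph.fromRel (fun a b => (b : ℕ) = (a : ℕ) + 1 ∨ ((a : ℕ) = 3 ∧ (b : ℕ) = 0))

/-- The graph `2K₂` (edges 01 and 23). -/
def twoK2 : SimpleGraph (Fin 4) :=
  SimpleGraph.fromRel (fun a b => ((a : ℕ) = 0 ∧ (b : ℕ) = 1) ∨ ((a : ℕ) = 2 ∧ (b : ℕ) = 3))

/-- Cographs: the graphs with no induced `P₄`. -/
def IsCograph {V : Type} (G : SimpleGraph V) : Prop :=
  ¬ InducedSubgraphOf pathP4 G

/-- Quasi-threshold (trivially perfect) graphs: no induced `P₄` and no induced `C₄`. -/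
def IsQuasiThreshold {V : Type} (G : SimpleGraph V) : Prop :=
  ¬ InducedSubgraphOf pathP4 G ∧ ¬ InducedSubgraphOf cycleC4 G

/-- Threshold graphs: no induced `P₄`, `C₄` or `2K₂`. -/
def IsThreshold {V : Type} (G : SimpleGraph V) : Prop :=
  ¬ InducedSubgraphOf pathP4 G ∧ ¬ InducedSubgraphOf cycleC4 G ∧ ¬ InducedSubgraphOf twoK2 G

/-- A finite graph, encoded with vertex set `Fin n`.  A *class* of graphs,
i.e. a set of finite graphs closed under isomorphism, is modelled as a
hereditary set of `FinGraph`s (hereditary sets are automatically closed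
under isomorphism). -/
def FinGraph : Type := Σ n : ℕ, SimpleGraph (Fin n)

/-- The complement of a finite graph. -/
def FinGraph.compl (G : FinGraph) : FinGraph := ⟨G.1, G.2ᶜ⟩

/-- The induced-subgraph order on finite graphs. -/
def IndF (H G : FinGraph) : Prop := InducedSubgraphOf H.2 G.2

/-- A set of finite graphs is hereditary if it is closed downward under the
induced subgraph order (in particular it is closed under isomorphism). -/
def Hereditary (C : Set FinGraph) : Prop :=
  ∀ G ∈ C, ∀ H : FinGraph, IndF H G → H ∈ C

/-- The finite graph `K` is isomorphic to the graph `G`. -/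
def IsoTo {V : Type} (K : FinGraph) (G : SimpleGraph V) : Prop :=
  ∃ e : Fin K.1 ≃ V, ∀ a b, K.2.Adj a b ↔ G.Adj (e a) (e b)

/-- The class `C` contains (a copy of) the graph `G`. -/
def MemUpToIso (C : Set FinGraph) {V : Type} (G : SimpleGraph V) : Prop :=
  ∃ K ∈ C, IsoTo K G

/-- `C` is closed under disjoint unions. -/
def ClosedUnderDisjointUnions (C : Set FinGraph) : Prop :=
  ∀ G ∈ C, ∀ H ∈ C, MemUpToIso C (GraphDisjUnion (Sigma.snd G) (Sigma.snd H))

/-- `C` is closed under joins. -/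
def ClosedUnderJoins (C : Set FinGraph) : Prop :=
  ∀ G ∈ C, ∀ H ∈ C, MemUpToIso C (GraphJoin (Sigma.snd G) (Sigma.snd H))

/-- `C` is atomic: it cannot be written as the union of two proper
hereditary subclasses. -/
def AtomicClass (C : Set FinGraph) : Prop :=
  ¬ ∃ D₁ D₂ : Set FinGraph, Hereditary D₁ ∧ Hereditary D₂ ∧
      D₁ ⊂ C ∧ D₂ ⊂ C ∧ C = D₁ ∪ D₂

/-- The inflation `G[H₁, …, Hₙ]` of a graph `G` on `Fin n` by graphs
`H i` (`i : Fin n`): substitute `H i` for the vertex `i` of `G`. -/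
def inflate {n : ℕ} (G : SimpleGraph (Fin n)) (m : Fin n → ℕ)
    (H : ∀ i : Fin n, SimpleGraph (Fin (m i))) :
    SimpleGraph (Σ i : Fin n, Fin (m i)) where
  Adj x y := (x.1 ≠ y.1 ∧ G.Adj x.1 y.1) ∨ ∃ h : x.1 = y.1, (H y.1).Adj (h ▸ x.2) y.2
  symm := by
    constructor
    rintro ⟨i, a⟩ ⟨j, b⟩ (⟨hne, hadj⟩ | ⟨h, hadj⟩)
    · exact Or.inl ⟨hne.symm, G.adj_symm hadj⟩
    · cases h
      exact Or.inr ⟨rfl, (H i).adj_symm hadj⟩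
  loopless := by
    constructor
    rintro ⟨i, a⟩ (⟨hne, _⟩ | ⟨h, hadj⟩)
    · exact hne rfl
    · exact (H i).loopless.irrefl a hadj

/-- The inflation `C[D]` of the class `C` by the class `D`: all graphs
isomorphic to an inflation of a graph of `C` by graphs of `D`. -/
def classInflate (C D : Set FinGraph) : Set FinGraph :=
  {K | ∃ (n : ℕ) (G : SimpleGraph (Fin n)) (m : Fin n → ℕ)
        (H : ∀ i : Fin n, SimpleGraph (Fin (m i))),
      (⟨n, G⟩ : FinGraph) ∈ C ∧ (∀ i, (⟨m i, H i⟩ : FinGraph) ∈ D) ∧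
      IsoTo K (inflate G m H)}

/-- The class of threshold graphs (as finite graphs). -/
def thresholdClass : Set FinGraph := {G : FinGraph | IsThreshold G.2}

/-- Vertex types of the sequence witnessing unbounded linear clique-width:
`qtV 0` carries `G₁ = K₂` and `qtV (k+1)` carries
`G_{k+2} = K₁ ∗ ((G_{k+1} ∪ G_{k+1}) ∪ (G_{k+1} ∪ G_{k+1}))`. -/
def qtV : ℕ → Type
  | 0 => Fin 2
  | k + 1 => Unit ⊕ ((qtV k ⊕ qtV k) ⊕ (qtV k ⊕ qtV k))

instance qtVFintype : ∀ k : ℕ, Fintype (qtV k)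
  | 0 => inferInstanceAs (Fintype (Fin 2))
  | k + 1 =>
      letI := qtVFintype k
      inferInstanceAs (Fintype (Unit ⊕ ((qtV k ⊕ qtV k) ⊕ (qtV k ⊕ qtV k))))

/-- The graphs `G₁, G₂, …` of the paper, reindexed so that `qtG k = G_{k+1}`:
`qtG 0 = K₂` and `qtG (k+1) = K₁ ∗ ((qtG k ∪ qtG k) ∪ (qtG k ∪ qtG k))`. -/
def qtG : ∀ k : ℕ, SimpleGraph (qtV k)
  | 0 => (⊤ : SimpleGraph (Fin 2))
  | k + 1 =>
      GraphJoin (⊥ : SimpleGraph Unit)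
        (GraphDisjUnion (GraphDisjUnion (qtG k) (qtG k)) (GraphDisjUnion (qtG k) (qtG k)))


/-! ### Auxiliary development for `statement_12` -/

namespace Statement12

/-- Partial sums of a multiplicity function. -/
def off (c : ℕ → ℕ) (t : ℕ) : ℕ := ∑ s ∈ Finset.range t, c s

lemma off_zero (c : ℕ → ℕ) : off c 0 = 0 := by simp [off]

lemma off_succ (c : ℕ → ℕ) (t : ℕ) : off c (t + 1) = off c t + c t := by
  simp [off, Finset.sum_range_succ]

lemma off_mono (c : ℕ → ℕ) {t t' : ℕ} (h : t ≤ t') : off c t ≤ off c t' := by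
  unfold off
  exact Finset.sum_le_sum_of_subset (Finset.range_subset_range.2 h)

lemma off_exists (c : ℕ → ℕ) : ∀ (k x : ℕ), x < off c k →
    ∃ t, t < k ∧ off c t ≤ x ∧ x < off c (t + 1) := by
  intro k
  induction k with
  | zero => intro x hx; rw [off_zero] at hx; omega
  | succ k ih =>
    intro x hx
    by_cases h : x < off c k
    · obtain ⟨t, ht, h1, h2⟩ := ih x h
      exact ⟨t, by omega, h1, h2⟩
    · exact ⟨k, by omega, by omega, hx⟩

lemma off_unique (c : ℕ → ℕ) {t t' x : ℕ} (h1 : off c t ≤ x) (h2 : x < off c (t + 1))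
    (h3 : off c t' ≤ x) (h4 : x < off c (t' + 1)) : t = t' := by
  rcases lt_trichotomy t t' with h | h | h
  · have := off_mono c (show t + 1 ≤ t' by omega)
    omega
  · exact h
  · have := off_mono c (show t' + 1 ≤ t by omega)
    omega

/-- Replace the `k`-th, `k+1`-st, … insert operations by multiple copies. -/
def repOps {L : Type} (c : ℕ → ℕ) : ℕ → List (LcwOp L) → List (LcwOp L)
  | _, [] => []
  | k, LcwOp.insert a :: rest =>
      List.replicate (c k) (LcwOp.insert a) ++ repOps c (k + 1) rest
  | k, LcwOp.join i j :: rest => LcwOp.join i j :: repOps c k rest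
  | k, LcwOp.relabel i j :: rest => LcwOp.relabel i j :: repOps c k rest

lemma mem_repOps {L : Type} (c : ℕ → ℕ) :
    ∀ (e : List (LcwOp L)) (k : ℕ) (op : LcwOp L), op ∈ repOps c k e →
      (∃ a, op = LcwOp.insert a) ∨ op ∈ e := by
  intro e
  induction e with
  | nil => intro k op h; simp [repOps] at h
  | cons hd rest ih =>
    intro k op h
    cases hd with
    | insert a =>
      rw [repOps, List.mem_append] at h
      rcases h with h | h
      · exact Or.inl ⟨a, List.eq_of_mem_replicate h⟩
      · rcases ih (k + 1) op h with h' | h'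
        · exact Or.inl h'
        · exact Or.inr (List.mem_cons_of_mem _ h')
    | join i j =>
      rw [repOps, List.mem_cons] at h
      rcases h with h | h
      · exact Or.inr (h ▸ List.mem_cons_self)
      · rcases ih k op h with h' | h'
        · exact Or.inl h'
        · exact Or.inr (List.mem_cons_of_mem _ h')
    | relabel i j =>
      rw [repOps, List.mem_cons] at h
      rcases h with h | h
      · exact Or.inr (h ▸ List.mem_cons_self)
      · rcases ih k op h with h' | h'
        · exact Or.inl h'
        · exact Or.inr (List.mem_cons_of_mem _ h')

lemma wf_repOps {L : Type} (c : ℕ → ℕ) (e : List (LcwOp L)) (k : ℕ) (hwf : WfExpr e) :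
    WfExpr (repOps c k e) := by
  intro op hop i j hij
  rcases mem_repOps c e k op hop with ⟨a, ha⟩ | h
  · rw [ha] at hij; exact absurd hij (by simp)
  · exact hwf op h i j hij

/-- Basic well-formedness invariant of a reachable state. -/
def Good {L : Type} (s : LcwState L) : Prop :=
  (∀ t, s.n ≤ t → s.lab t = none) ∧ ∀ u v, s.adj u v → u < s.n ∧ v < s.n

/-- Simulation relation between an original run and its replicated run. -/
def Sim {L : Type} (c : ℕ → ℕ) (s s' : LcwState L) : Prop :=
  s'.n = off c s.n ∧
  (∀ t, t < s.n → ∀ x, off c t ≤ x → x < off c (t + 1) → s'.lab x = s.lab t) ∧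
  (∀ x, off c s.n ≤ x → s'.lab x = none) ∧
  (∀ x y, s'.adj x y ↔ ∃ t t', t < s.n ∧ t' < s.n ∧ t ≠ t' ∧
      off c t ≤ x ∧ x < off c (t + 1) ∧ off c t' ≤ y ∧ y < off c (t' + 1) ∧ s.adj t t')

lemma run_replicate {L : Type} [DecidableEq L] (a : L) :
    ∀ (k : ℕ) (s : LcwState L),
      (List.foldl LcwState.step s (List.replicate k (LcwOp.insert a))).n = s.n + k ∧
      (List.foldl LcwState.step s (List.replicate k (LcwOp.insert a))).adj = s.adj ∧
      ∀ x, (List.foldl LcwState.step s (List.replicate k (LcwOp.insert a))).lab x =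
        if s.n ≤ x ∧ x < s.n + k then some a else s.lab x := by
  intro k
  induction k with
  | zero =>
    intro s
    refine ⟨rfl, rfl, fun x => ?_⟩
    rw [if_neg (by omega)]
    rfl
  | succ k ih =>
    intro s
    rw [List.replicate_succ, List.foldl_cons]
    obtain ⟨h1, h2, h3⟩ := ih (LcwState.step s (LcwOp.insert a))
    refine ⟨?_, ?_, fun x => ?_⟩
    · rw [h1]; simp [LcwState.step]; omega
    · rw [h2]; rfl
    · rw [h3 x]
      have hn1 : (LcwState.step s (LcwOp.insert a)).n = s.n + 1 := rfl
      simp only [LcwState.step]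
      show (if s.n + 1 ≤ x ∧ x < s.n + 1 + k then some a else (if x = s.n then some a else s.lab x)) = _
      split_ifs <;> first | rfl | omega

lemma main_sim {L : Type} [DecidableEq L] (c : ℕ → ℕ) :
    ∀ (e : List (LcwOp L)), WfExpr e → ∀ (s s' : LcwState L), Good s → Sim c s s' →
      Good (List.foldl LcwState.step s e) ∧
      Sim c (List.foldl LcwState.step s e) (List.foldl LcwState.step s' (repOps c s.n e)) := by
  intro e
  induction e with
  | nil => intro _ s s' hg hs; exact ⟨hg, hs⟩
  | cons op rest ih =>
    intro hwf s s' hg hs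
    obtain ⟨hgl, hga⟩ := hg
    obtain ⟨hsn, hsl, hsl2, hsa⟩ := hs
    have hwf' : WfExpr rest := fun o ho => hwf o (List.mem_cons_of_mem _ ho)
    cases op with
    | insert a =>
      rw [repOps, List.foldl_append, List.foldl_cons]
      obtain ⟨hr1, hr2, hr3⟩ := run_replicate a (c s.n) s'
      set s1 := LcwState.step s (LcwOp.insert a) with hs1def
      set s1' := List.foldl LcwState.step s' (List.replicate (c s.n) (LcwOp.insert a)) with hs1'def
      have hs1n : s1.n = s.n + 1 := rfl
      have hs1a : s1.adj = s.adj := rfl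
      have hs1l : ∀ t, s1.lab t = if t = s.n then some a else s.lab t := fun t => rfl
      have hg1 : Good s1 := by
        constructor
        · intro t ht
          rw [hs1l, if_neg (by omega)]
          exact hgl t (by omega)
        · intro u v huv
          rw [hs1a] at huv
          obtain ⟨h1, h2⟩ := hga u v huv
          omega
      have hsim1 : Sim c s1 s1' := by
        refine ⟨?_, ?_, ?_, ?_⟩
        · rw [hr1, hsn, hs1n, off_succ]
        · intro t ht x hx1 hx2
          rw [hs1n] at ht
          rw [hr3 x, hs1l]
          by_cases htn : t = s.n
          · subst htn
            rw [if_pos rfl, if_pos]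
            rw [off_succ] at hx2
            omega
          · have ht' : t < s.n := by omega
            rw [if_neg htn, if_neg, hsl t ht' x hx1 hx2]
            have : x < off c s.n := lt_of_lt_of_le hx2 (off_mono c (by omega))
            omega
        · intro x hx
          rw [hs1n, off_succ] at hx
          rw [hr3 x, if_neg (by omega)]
          exact hsl2 x (by omega)
        · intro x y
          rw [hr2, hsa x y, hs1n]
          constructor
          · rintro ⟨t, t', h1, h2, h3, h4, h5, h6, h7, h8⟩
            exact ⟨t, t', by omega, by omega, h3, h4, h5, h6, h7, h8⟩
          · rintro ⟨t, t', h1, h2, h3, h4, h5, h6, h7, h8⟩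
            rw [hs1a] at h8
            obtain ⟨hb1, hb2⟩ := hga t t' h8
            exact ⟨t, t', hb1, hb2, h3, h4, h5, h6, h7, h8⟩
      have := ih hwf' s1 s1' hg1 hsim1
      rwa [hs1n] at this
    | join i j =>
      have hij : i ≠ j := hwf _ (List.mem_cons_self) i j rfl
      rw [repOps, List.foldl_cons, List.foldl_cons]
      set s1 := LcwState.step s (LcwOp.join i j) with hs1def
      set s1' := LcwState.step s' (LcwOp.join i j) with hs1'def
      have hs1n : s1.n = s.n := rfl
      have hs1l : s1.lab = s.lab := rfl
      have hs1a : ∀ u v, s1.adj u v ↔ (s.adj u v ∨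
          (u ≠ v ∧ ((s.lab u = some i ∧ s.lab v = some j) ∨
                    (s.lab u = some j ∧ s.lab v = some i)))) := fun u v => Iff.rfl
      have hs1'n : s1'.n = s'.n := rfl
      have hs1'l : s1'.lab = s'.lab := rfl
      have hs1'a : ∀ u v, s1'.adj u v ↔ (s'.adj u v ∨
          (u ≠ v ∧ ((s'.lab u = some i ∧ s'.lab v = some j) ∨
                    (s'.lab u = some j ∧ s'.lab v = some i)))) := fun u v => Iff.rfl
      have hlab_lt : ∀ u (b : L), s.lab u = some b → u < s.n := by
        intro u b hb
        by_contra h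
        rw [hgl u (by omega)] at hb
        cases hb
      have hlab_lt' : ∀ u (b : L), s'.lab u = some b → u < off c s.n := by
        intro u b hb
        by_contra h
        rw [hsl2 u (by omega)] at hb
        cases hb
      have hg1 : Good s1 := by
        constructor
        · intro t ht; rw [hs1l]; exact hgl t ht
        · intro u v huv
          rw [hs1a] at huv
          rcases huv with h | ⟨hne, ⟨h1, h2⟩ | ⟨h1, h2⟩⟩
          · exact hga u v h
          · exact ⟨hlab_lt u i h1, hlab_lt v j h2⟩
          · exact ⟨hlab_lt u j h1, hlab_lt v i h2⟩
      have hsim1 : Sim c s1 s1' := by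
        refine ⟨?_, ?_, ?_, ?_⟩
        · rw [hs1'n, hs1n, hsn]
        · intro t ht x hx1 hx2
          rw [hs1'l, hs1l]
          exact hsl t ht x hx1 hx2
        · intro x hx
          rw [hs1'l]
          exact hsl2 x hx
        · intro x y
          rw [hs1'a, hsa x y]
          constructor
          · rintro (⟨t, t', h1, h2, h3, h4, h5, h6, h7, h8⟩ | ⟨hne, hcase⟩)
            · refine ⟨t, t', h1, h2, h3, h4, h5, h6, h7, ?_⟩
              rw [hs1a]; exact Or.inl h8
            · -- from a labels-based new edge, find the source vertices
              have key : ∀ (b b' : L), s'.lab x = some b → s'.lab y = some b' → b ≠ b' →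
                  ∃ t t', t < s.n ∧ t' < s.n ∧ t ≠ t' ∧
                    off c t ≤ x ∧ x < off c (t+1) ∧ off c t' ≤ y ∧ y < off c (t'+1) ∧
                    s.lab t = some b ∧ s.lab t' = some b' := by
                intro b b' hbx hby hbb
                obtain ⟨t, ht, ht1, ht2⟩ := off_exists c s.n x (hlab_lt' x b hbx)
                obtain ⟨t', ht', ht1', ht2'⟩ := off_exists c s.n y (hlab_lt' y b' hby)
                have hxl : s.lab t = some b := by rw [← hsl t ht x ht1 ht2]; exact hbx
                have hyl : s.lab t' = some b' := by rw [← hsl t' ht' y ht1' ht2']; exact hby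
                have htt : t ≠ t' := by
                  intro h; subst h
                  rw [hxl] at hyl
                  exact hbb (Option.some_injective _ hyl)
                exact ⟨t, t', ht, ht', htt, ht1, ht2, ht1', ht2', hxl, hyl⟩
              rcases hcase with ⟨h1, h2⟩ | ⟨h1, h2⟩
              · obtain ⟨t, t', ha1, ha2, ha3, ha4, ha5, ha6, ha7, ha8, ha9⟩ :=
                  key i j h1 h2 hij
                refine ⟨t, t', ha1, ha2, ha3, ha4, ha5, ha6, ha7, ?_⟩
                rw [hs1a]
                exact Or.inr ⟨ha3, Or.inl ⟨ha8, ha9⟩⟩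
              · obtain ⟨t, t', ha1, ha2, ha3, ha4, ha5, ha6, ha7, ha8, ha9⟩ :=
                  key j i h1 h2 (Ne.symm hij)
                refine ⟨t, t', ha1, ha2, ha3, ha4, ha5, ha6, ha7, ?_⟩
                rw [hs1a]
                exact Or.inr ⟨ha3, Or.inr ⟨ha8, ha9⟩⟩
          · rintro ⟨t, t', h1, h2, h3, h4, h5, h6, h7, h8⟩
            rw [hs1a] at h8
            have hxy : x ≠ y := by
              intro h; subst h
              exact h3 (off_unique c h4 h5 h6 h7)
            rcases h8 with h8 | ⟨_, ⟨hl1, hl2⟩ | ⟨hl1, hl2⟩⟩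
            · exact Or.inl ⟨t, t', h1, h2, h3, h4, h5, h6, h7, h8⟩
            · refine Or.inr ⟨hxy, Or.inl ⟨?_, ?_⟩⟩
              · rw [hsl t h1 x h4 h5]; exact hl1
              · rw [hsl t' h2 y h6 h7]; exact hl2
            · refine Or.inr ⟨hxy, Or.inr ⟨?_, ?_⟩⟩
              · rw [hsl t h1 x h4 h5]; exact hl1
              · rw [hsl t' h2 y h6 h7]; exact hl2
      exact ih hwf' s1 s1' hg1 hsim1
    | relabel i j =>
      rw [repOps, List.foldl_cons, List.foldl_cons]
      set s1 := LcwState.step s (LcwOp.relabel i j) with hs1def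
      set s1' := LcwState.step s' (LcwOp.relabel i j) with hs1'def
      have hs1n : s1.n = s.n := rfl
      have hs1a : s1.adj = s.adj := rfl
      have hs1l : ∀ t, s1.lab t = if s.lab t = some i then some j else s.lab t :=
        fun t => rfl
      have hs1'n : s1'.n = s'.n := rfl
      have hs1'a : s1'.adj = s'.adj := rfl
      have hs1'l : ∀ x, s1'.lab x = if s'.lab x = some i then some j else s'.lab x :=
        fun x => rfl
      have hg1 : Good s1 := by
        constructor
        · intro t ht
          rw [hs1l, hgl t ht]
          simp
        · intro u v huv
          rw [hs1a] at huv
          exact hga u v huv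
      have hsim1 : Sim c s1 s1' := by
        refine ⟨?_, ?_, ?_, ?_⟩
        · rw [hs1'n, hs1n, hsn]
        · intro t ht x hx1 hx2
          rw [hs1'l, hs1l, hsl t ht x hx1 hx2]
        · intro x hx
          rw [hs1'l, hsl2 x hx]
          simp
        · intro x y
          rw [hs1'a, hs1a]
          exact hsa x y
      exact ih hwf' s1 s1' hg1 hsim1

lemma run_repOps {L : Type} [DecidableEq L] (c : ℕ → ℕ) (e : List (LcwOp L))
    (hwf : WfExpr e) :
    Good (runLcw e) ∧ Sim c (runLcw e) (runLcw (repOps c 0 e)) := by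
  have hg : Good (LcwState.init L) := by
    constructor
    · intro t _; rfl
    · intro u v h; exact absurd h not_false
  have hs : Sim c (LcwState.init L) (LcwState.init L) := by
    refine ⟨?_, ?_, ?_, ?_⟩
    · show (0 : ℕ) = off c 0
      rw [off_zero]
    · intro t ht; exact absurd ht (Nat.not_lt_zero t)
    · intro x _; rfl
    · intro x y
      constructor
      · intro h; exact absurd h not_false
      · rintro ⟨t, t', h1, _⟩; exact absurd h1 (Nat.not_lt_zero t)
  exact main_sim c e hwf _ _ hg hs

lemma builds_inflate {n : ℕ} {L : Type} [DecidableEq L] (G : SimpleGraph (Fin n))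
    (m : Fin n → ℕ) (H : ∀ i : Fin n, SimpleGraph (Fin (m i)))
    (hedgeless : ∀ i, H i = ⊥) (e : List (LcwOp L)) (he : Builds e G) :
    ∃ e' : List (LcwOp L), Builds e' (inflate G m H) := by
  obtain ⟨f, hwf, hinj, hcard, hlt, hadj⟩ := he
  have hn : (runLcw e).n = n := by rw [hcard, Fintype.card_fin]
  have hflt : ∀ i : Fin n, f i < n := fun i => by rw [← hn]; exact hlt i
  set F : Fin n → Fin n := fun i => ⟨f i, hflt i⟩ with hF
  have hFinj : Function.Injective F := by
    intro a b hab
    exact hinj (congrArg Fin.val hab)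
  have hFbij : Function.Bijective F := Finite.injective_iff_bijective.1 hFinj
  set E := Equiv.ofBijective F hFbij with hE
  set c : ℕ → ℕ := fun t => if h : t < n then m (E.symm ⟨t, h⟩) else 0 with hc
  have hcf : ∀ i : Fin n, c (f i) = m i := by
    intro i
    have h1 : f i < n := hflt i
    have h2 : (⟨f i, h1⟩ : Fin n) = E i := rfl
    simp only [hc, dif_pos h1]
    rw [h2, Equiv.symm_apply_apply]
  obtain ⟨-, hn', hlab, hlab2, hadjchar⟩ := run_repOps c e hwf
  have hoffn : off c n = ∑ i : Fin n, m i := by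
    rw [off, ← Fin.sum_univ_eq_sum_range (fun t => c t) n]
    rw [← Equiv.sum_comp E.symm m]
    apply Finset.sum_congr rfl
    intro x _
    simp only [hc, dif_pos x.isLt]
  have hcardsig : Fintype.card (Σ i : Fin n, Fin (m i)) = ∑ i : Fin n, m i := by
    simp [Fintype.card_sigma]
  set f' : (Σ i : Fin n, Fin (m i)) → ℕ := fun v => off c (f v.1) + (v.2 : ℕ) with hf'
  have hint : ∀ v : Σ i : Fin n, Fin (m i),
      off c (f v.1) ≤ f' v ∧ f' v < off c (f v.1 + 1) := by
    intro v
    constructor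
    · exact Nat.le_add_right _ _
    · rw [off_succ, hcf]
      have h := v.2.isLt
      show off c (f v.1) + (v.2 : ℕ) < off c (f v.1) + m v.1
      omega
  refine ⟨repOps c 0 e, f', wf_repOps c e 0 hwf, ?_, ?_, ?_, ?_⟩
  · rintro ⟨i, a⟩ ⟨j, b⟩ hab
    obtain ⟨h1, h2⟩ := hint ⟨i, a⟩
    obtain ⟨h3, h4⟩ := hint ⟨j, b⟩
    rw [hab] at h1 h2
    have hfij : f i = f j := off_unique c h1 h2 h3 h4
    have hij : i = j := hinj hfij
    subst hij
    have hval : (a : ℕ) = (b : ℕ) := Nat.add_left_cancel hab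
    rw [Fin.ext hval]
  · rw [hn', hn, hoffn, hcardsig]
  · intro v
    obtain ⟨-, h2⟩ := hint v
    rw [hn', hn]
    exact lt_of_lt_of_le h2 (off_mono c (hflt v.1))
  · rintro ⟨i, a⟩ ⟨j, b⟩
    rw [hadjchar]
    constructor
    · rintro (⟨hne, hG⟩ | ⟨hh, hH⟩)
      · obtain ⟨h1, h2⟩ := hint ⟨i, a⟩
        obtain ⟨h3, h4⟩ := hint ⟨j, b⟩
        refine ⟨f i, f j, ?_, ?_, fun h => hne (hinj h), h1, h2, h3, h4, (hadj i j).1 hG⟩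
        · rw [hn]; exact hflt i
        · rw [hn]; exact hflt j
      · rw [hedgeless j] at hH
        simp at hH
    · rintro ⟨t, t', ht1, ht2, ht3, ht4, ht5, ht6, ht7, ht8⟩
      obtain ⟨h1, h2⟩ := hint ⟨i, a⟩
      obtain ⟨h3, h4⟩ := hint ⟨j, b⟩
      have hti : t = f i := off_unique c ht4 ht5 h1 h2
      have htj : t' = f j := off_unique c ht6 ht7 h3 h4
      subst hti htj
      refine Or.inl ⟨fun h => ht3 (congrArg f h), (hadj i j).2 ht8⟩

lemma builds_base {n : ℕ} {L : Type} [DecidableEq L] (G : SimpleGraph (Fin n))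
    (m : Fin n → ℕ) (H : ∀ i : Fin n, SimpleGraph (Fin (m i)))
    (hnonempty : ∀ i, 0 < m i)
    (e : List (LcwOp L)) (he : Builds e (inflate G m H)) :
    ∃ e' : List (LcwOp L), Builds e' G := by
  classical
  obtain ⟨f, hwf, hinj, hcard, hlt, hadj⟩ := he
  set z : Fin n → Σ i : Fin n, Fin (m i) := fun i => ⟨i, ⟨0, hnonempty i⟩⟩ with hz
  have hzinj : Function.Injective z := by
    intro a b hab
    exact congrArg Sigma.fst hab
  set c : ℕ → ℕ := fun t => if ∃ i : Fin n, f (z i) = t then 1 else 0 with hc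
  have hcz : ∀ i, c (f (z i)) = 1 := fun i => if_pos ⟨i, rfl⟩
  obtain ⟨-, hn', hlab, hlab2, hadjchar⟩ := run_repOps c e hwf
  set N := (runLcw e).n with hN
  have hfzlt : ∀ i, f (z i) < N := fun i => hlt (z i)
  have hfilter : (Finset.range N).filter (fun t => ∃ i : Fin n, f (z i) = t)
      = Finset.image (fun i => f (z i)) Finset.univ := by
    ext t
    simp only [Finset.mem_filter, Finset.mem_range, Finset.mem_image, Finset.mem_univ,
      true_and]
    constructor
    · rintro ⟨-, i, hi⟩
      exact ⟨i, hi⟩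
    · rintro ⟨i, hi⟩
      exact ⟨hi ▸ hfzlt i, i, hi⟩
  have hoffN : off c N = n := by
    rw [off]
    have h1 : ∑ t ∈ Finset.range N, c t
        = ((Finset.range N).filter (fun t => ∃ i : Fin n, f (z i) = t)).card :=
      (Finset.card_filter _ _).symm
    rw [h1, hfilter,
      Finset.card_image_of_injective _
        (show Function.Injective (fun i => f (z i)) from fun a b h => hzinj (hinj h)),
      Finset.card_univ, Fintype.card_fin]
  set f' : Fin n → ℕ := fun i => off c (f (z i)) with hf'
  have hint : ∀ i : Fin n, off c (f (z i)) ≤ f' i ∧ f' i < off c (f (z i) + 1) := by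
    intro i
    refine ⟨le_refl _, ?_⟩
    rw [off_succ, hcz]
    show off c (f (z i)) < off c (f (z i)) + 1
    omega
  refine ⟨repOps c 0 e, f', wf_repOps c e 0 hwf, ?_, ?_, ?_, ?_⟩
  · intro a b hab
    obtain ⟨h1, h2⟩ := hint a
    obtain ⟨h3, h4⟩ := hint b
    rw [hab] at h1 h2
    exact hzinj (hinj (off_unique c h1 h2 h3 h4))
  · rw [hn', hoffN, Fintype.card_fin]
  · intro v
    obtain ⟨-, h2⟩ := hint v
    rw [hn']
    exact lt_of_lt_of_le h2 (off_mono c (hfzlt v))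
  · intro i j
    rw [hadjchar]
    constructor
    · intro hG
      obtain ⟨h1, h2⟩ := hint i
      obtain ⟨h3, h4⟩ := hint j
      refine ⟨f (z i), f (z j), hfzlt i, hfzlt j,
        fun h => G.ne_of_adj hG (hzinj (hinj h)), h1, h2, h3, h4, ?_⟩
      exact (hadj (z i) (z j)).1 (Or.inl ⟨fun h => G.ne_of_adj hG h, hG⟩)
    · rintro ⟨t, t', ht1, ht2, ht3, ht4, ht5, ht6, ht7, ht8⟩
      obtain ⟨h1, h2⟩ := hint i
      obtain ⟨h3, h4⟩ := hint j
      have hti : t = f (z i) := off_unique c ht4 ht5 h1 h2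
      have htj : t' = f (z j) := off_unique c ht6 ht7 h3 h4
      subst hti htj
      have := (hadj (z i) (z j)).2 ht8
      rcases this with ⟨-, hG⟩ | ⟨hh, -⟩
      · exact hG
      · exact absurd (congrArg (fun i => f (z i)) (show i = j from hh)) ht3

end Statement12

/-- inflating a graph `G` by nonempty edgeless graphs does
not change the linear clique-width. -/
theorem statement_12 (n : ℕ) (G : SimpleGraph (Fin n)) (m : Fin n → ℕ)
    (H : ∀ i : Fin n, SimpleGraph (Fin (m i)))
    (hedgeless : ∀ i, H i = ⊥) (hnonempty : ∀ i, 0 < m i) :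
    lcw (inflate G m H) = lcw G := by
  have hset : {k : ℕ | ∃ e : List (LcwOp (Fin k)), Builds e (inflate G m H)} =
      {k : ℕ | ∃ e : List (LcwOp (Fin k)), Builds e G} := by
    ext k
    simp only [Set.mem_setOf_eq]
    constructor
    · rintro ⟨e, he⟩
      exact Statement12.builds_base G m H hnonempty e he
    · rintro ⟨e, he⟩
      exact Statement12.builds_inflate G m H hedgeless e he
  unfold lcw
  rw [hset]
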